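/- arXiv:1110.5692 — 2 statements merged into one kernel-verified Lean document; each statement's English description precedes it below -/
import Mathlib

section
/- Let α ∈ (0,1), ε ∈ (0,1/2), z ∈ ℝ. Let X : ℝ → ℝ be continuously differentiable with X(x) = 0 for |x| ≥ 1. Let b : ℝ → ℂ be 2π-periodic, α-Hölder continuous, and satisfying the little-Hölder-α condition. Define b_{z,ε}(x) := Σ_{k∈ℤ} X(x − z − 2πk)·( b(z + r_ε(x − z − 2πk)) − b(z) ). Then b_{z,ε} is 2π-periodic, α-Hölder continuous, and satisfies the little-Hölder-α condition. -/
open Real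

/-- The canonical distance on `ℝ / 2πℤ`: `d_per(x,y) = inf_{k ∈ ℤ} |x - y + 2πk|`. -/
noncomputable def dper (x y : ℝ) : ℝ := ⨅ k : ℤ, |x - y + 2 * π * k|

/-- A function `f : ℝ → ℂ` is `2π`-periodic. -/
def Per (f : ℝ → ℂ) : Prop := ∀ x, f (x + 2 * π) = f x

/-- The truncation `r_ε`: `r_ε(x) = x` if `|x| ≤ ε`, `ε` if `x > ε`, `−ε` if `x < −ε`. -/
noncomputable def rtr (ε x : ℝ) : ℝ := if |x| ≤ ε then x else if ε < x then ε else -ε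

/-- The localized coefficient
`b_{z,ε}(x) = Σ_{k ∈ ℤ} X(x − z − 2πk) · (b(z + r_ε(x − z − 2πk)) − b(z))`. -/
noncomputable def bze (X : ℝ → ℝ) (b : ℝ → ℂ) (z ε x : ℝ) : ℂ :=
  ∑' k : ℤ, (X (x - z - 2 * π * k) : ℂ) * (b (z + rtr ε (x - z - 2 * π * k)) - b z)

/-- The set of (Euclidean) Hölder quotients of `g` with exponent `α`. -/
def holderSet (α : ℝ) (g : ℝ → ℂ) : Set ℝ :=
  {r | ∃ x y : ℝ, x ≠ y ∧ r = ‖g x - g y‖ / |x - y| ^ α}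

/-- `g` is α-Hölder continuous: `[g]_α < ∞`. -/
def HolderFin (α : ℝ) (g : ℝ → ℂ) : Prop := BddAbove (holderSet α g)

/-- The little-Hölder-α condition. -/
def LittleHolder (α : ℝ) (g : ℝ → ℂ) : Prop :=
  ∀ η > (0 : ℝ), ∃ δ > (0 : ℝ), ∀ x y : ℝ, 0 < |x - y| → |x - y| < δ →
    ‖g x - g y‖ / |x - y| ^ α < η

lemma rtr_eq {ε : ℝ} (hε : 0 < ε) (x : ℝ) : rtr ε x = max (-ε) (min x ε) := by
  unfold rtr
  split_ifs with h1 h2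
  · rw [abs_le] at h1
    rw [min_eq_left h1.2, max_eq_right h1.1]
  · rw [min_eq_right h2.le, max_eq_right (by linarith)]
  · push_neg at h2
    have hx : x < -ε := by
      rcases lt_or_ge x (-ε) with h | h
      · exact h
      · exact absurd (abs_le.mpr ⟨h, h2⟩) h1
    rw [min_eq_left (by linarith), max_eq_left (by linarith)]

lemma rtr_lip {ε : ℝ} (hε : 0 < ε) (a c : ℝ) : |rtr ε a - rtr ε c| ≤ |a - c| := by
  rw [rtr_eq hε, rtr_eq hε]
  calc |max (-ε) (min a ε) - max (-ε) (min c ε)| ≤ |min a ε - min c ε| := by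
        rw [max_comm (-ε), max_comm (-ε)]; exact abs_max_sub_max_le_abs _ _ _
    _ ≤ |a - c| := by
        have := abs_min_sub_min_le_max a ε c ε
        simpa using this

lemma rtr_abs_le {ε : ℝ} (hε : 0 < ε) (x : ℝ) : |rtr ε x| ≤ ε := by
  rw [rtr_eq hε, abs_le]
  refine ⟨le_max_left _ _, max_le (by linarith) (min_le_right _ _)⟩

/-- argument at the selected index -/
noncomputable def tau (z x : ℝ) : ℝ := x - z - 2 * π * (round ((x - z) / (2 * π)) : ℤ)

lemma tau_abs_le (z x : ℝ) : |tau z x| ≤ π := by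
  have hπ : (0:ℝ) < 2 * π := by positivity
  have h := abs_sub_round ((x - z) / (2 * π))
  have : tau z x = 2 * π * ((x - z) / (2 * π) - (round ((x - z) / (2 * π)) : ℤ)) := by
    unfold tau; field_simp
  rw [this, abs_mul, abs_of_pos hπ]
  calc 2 * π * |(x - z) / (2 * π) - (round ((x - z) / (2 * π)) : ℤ)| ≤ 2 * π * (1/2) := by
        exact mul_le_mul_of_nonneg_left h hπ.le
    _ = π := by ring

lemma arg_big {z x : ℝ} {k : ℤ} (hk : k ≠ round ((x - z) / (2 * π))) :
    π ≤ |x - z - 2 * π * k| := by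
  have hπ : (0:ℝ) < 2 * π := by positivity
  set θ := (x - z) / (2 * π)
  have hrw : x - z - 2 * π * k = 2 * π * (θ - k) := by
    unfold θ; field_simp
  have h1 : (1:ℝ) ≤ |(round θ : ℝ) - k| := by
    have : (1:ℤ) ≤ |round θ - k| := Int.one_le_abs (sub_ne_zero.mpr (Ne.symm hk))
    calc (1:ℝ) = ((1:ℤ):ℝ) := by norm_num
      _ ≤ ((|round θ - k| : ℤ) : ℝ) := by exact_mod_cast this
      _ = |(round θ : ℝ) - k| := by push_cast [Int.cast_abs]; ring_nf
  have h2 := abs_sub_round θ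
  have h3 : (1:ℝ)/2 ≤ |θ - k| := by
    have := abs_sub_abs_le_abs_sub ((round θ : ℝ) - k) (θ - k)
    have h4 : |(round θ : ℝ) - k - (θ - k)| = |θ - round θ| := by
      rw [show (round θ : ℝ) - k - (θ - k) = -(θ - round θ) by ring, abs_neg]
    rw [h4] at this
    linarith
  rw [hrw, abs_mul, abs_of_pos hπ]
  nlinarith [pi_pos]

lemma bze_collapse (X : ℝ → ℝ) (hXsupp : ∀ x : ℝ, 1 ≤ |x| → X x = 0)
    (b : ℝ → ℂ) (z ε x : ℝ) :
    bze X b z ε x = (X (tau z x) : ℂ) * (b (z + rtr ε (tau z x)) - b z) := by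
  unfold bze tau
  exact tsum_eq_single (round ((x - z) / (2 * π))) (fun k hk => by
    rw [hXsupp _ (le_trans (by linarith [pi_gt_three]) (arg_big hk))]
    simp)

lemma tau_add (z x : ℝ) : tau z (x + 2 * π) = tau z x := by
  have hπ : (0:ℝ) < 2 * π := by positivity
  have h1 : (x + 2 * π - z) / (2 * π) = (x - z) / (2 * π) + (1 : ℤ) := by
    push_cast; field_simp; ring
  unfold tau
  rw [h1, round_add_intCast]
  push_cast
  ring

set_option maxHeartbeats 1000000 in
/-- If `b` is `2π`-periodic, α-Hölder and little-Hölder-α, then so is the localized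
coefficient `b_{z,ε}`. -/
theorem localized_coefficient_littleHolder
    (α ε z : ℝ) (hα : α ∈ Set.Ioo (0 : ℝ) 1) (hε : ε ∈ Set.Ioo (0 : ℝ) (1 / 2))
    (X : ℝ → ℝ) (hX : ContDiff ℝ 1 X) (hXsupp : ∀ x : ℝ, 1 ≤ |x| → X x = 0)
    (b : ℝ → ℂ) (hb : Per b) (hbH : HolderFin α b) (hbl : LittleHolder α b) :
    Per (bze X b z ε) ∧ HolderFin α (bze X b z ε) ∧ LittleHolder α (bze X b z ε) := by
  obtain ⟨hα0, hα1⟩ := hα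
  obtain ⟨hε0, hε2⟩ := hε
  -- the single-bump function
  set F : ℝ → ℂ := fun t => (X t : ℂ) * (b (z + rtr ε t) - b z) with hF
  have hcol : ∀ x, bze X b z ε x = F (tau z x) := fun x => bze_collapse X hXsupp b z ε x
  -- Hölder constant for b
  obtain ⟨C0, hC0⟩ := hbH
  set Cb : ℝ := max C0 0 with hCb
  have hCb0 : 0 ≤ Cb := le_max_right _ _
  have hC : ∀ u v : ℝ, ‖b u - b v‖ ≤ Cb * |u - v| ^ α := by
    intro u v
    by_cases huv : u = v
    · subst huv
      simp [Real.zero_rpow (ne_of_gt hα0)]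
    · have hpos : (0:ℝ) < |u - v| ^ α :=
        Real.rpow_pos_of_pos (abs_pos.mpr (sub_ne_zero.mpr huv)) α
      have hmem : ‖b u - b v‖ / |u - v| ^ α ∈ holderSet α b :=
        ⟨u, v, huv, rfl⟩
      have := le_trans (hC0 hmem) (le_max_left C0 0)
      calc ‖b u - b v‖
          = ‖b u - b v‖ / |u - v| ^ α * |u - v| ^ α := by
            field_simp
        _ ≤ Cb * |u - v| ^ α := mul_le_mul_of_nonneg_right this hpos.le
  -- bound on X
  obtain ⟨M0, hM0⟩ := (isCompact_Icc (a := (-1:ℝ)) (b := 1)).exists_bound_of_continuousOn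
    hX.continuous.continuousOn
  set M : ℝ := max M0 0 with hM
  have hM0' : 0 ≤ M := le_max_right _ _
  have hMb : ∀ t : ℝ, |X t| ≤ M := by
    intro t
    by_cases h : |t| ≤ 1
    · have ht : t ∈ Set.Icc (-1:ℝ) 1 := by
        rw [Set.mem_Icc]; exact abs_le.mp h
      have := hM0 t ht
      rw [Real.norm_eq_abs] at this
      exact le_trans this (le_max_left _ _)
    · rw [hXsupp t (le_of_not_ge h)]
      simpa using hM0'
  -- Lipschitz bound on X on [-π, π]
  obtain ⟨L0, hL0⟩ := (isCompact_Icc (a := -π) (b := π)).exists_bound_of_continuousOn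
    (hX.continuous_deriv le_rfl).continuousOn
  set L : ℝ := max L0 0 with hL
  have hL0' : 0 ≤ L := le_max_right _ _
  have hLb : ∀ a ∈ Set.Icc (-π) π, ∀ c ∈ Set.Icc (-π) π, |X a - X c| ≤ L * |a - c| := by
    intro a ha c hc
    have := (convex_Icc (-π) π).norm_image_sub_le_of_norm_deriv_le (C := L)
      (fun x _ => (hX.differentiable one_ne_zero).differentiableAt)
      (fun x hx => le_trans (hL0 x hx) (le_max_left _ _)) hc ha
    rw [Real.norm_eq_abs, Real.norm_eq_abs] at this
    exact this
  -- bound on F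
  have hFb : ∀ t : ℝ, ‖F t‖ ≤ M * (Cb * ε ^ α) := by
    intro t
    rw [hF]
    simp only [norm_mul, Complex.norm_real, Real.norm_eq_abs]
    have h1 : ‖b (z + rtr ε t) - b z‖ ≤ Cb * ε ^ α := by
      calc ‖b (z + rtr ε t) - b z‖ ≤ Cb * |z + rtr ε t - z| ^ α := hC _ _
        _ = Cb * |rtr ε t| ^ α := by ring_nf
        _ ≤ Cb * ε ^ α := by
            exact mul_le_mul_of_nonneg_left
              (Real.rpow_le_rpow (abs_nonneg _) (rtr_abs_le hε0 t) hα0.le) hCb0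
    exact mul_le_mul (hMb t) h1 (norm_nonneg _) hM0'
  have hF0 : ∀ t : ℝ, 1 ≤ |t| → F t = 0 := by
    intro t ht; rw [hF]; simp [hXsupp t ht]
  -- increment bound for F within [-π, π]
  have hFd : ∀ s t : ℝ, s ∈ Set.Icc (-π) π → t ∈ Set.Icc (-π) π →
      ‖F s - F t‖ ≤
        M * ‖b (z + rtr ε s) - b (z + rtr ε t)‖ + Cb * ε ^ α * (L * |s - t|) := by
    intro s t hs ht
    have key : F s - F t = (X s : ℂ) * (b (z + rtr ε s) - b (z + rtr ε t))
        + ((X s : ℂ) - (X t : ℂ)) * (b (z + rtr ε t) - b z) := by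
      rw [hF]; ring
    rw [key]
    calc ‖_‖ ≤ ‖(X s : ℂ) * (b (z + rtr ε s) - b (z + rtr ε t))‖
          + ‖((X s : ℂ) - (X t : ℂ)) * (b (z + rtr ε t) - b z)‖ :=
        norm_add_le _ _
      _ ≤ M * ‖b (z + rtr ε s) - b (z + rtr ε t)‖ + Cb * ε ^ α * (L * |s - t|) := by
        gcongr ?_ + ?_
        · rw [norm_mul, Complex.norm_real, Real.norm_eq_abs]
          exact mul_le_mul_of_nonneg_right (hMb s) (norm_nonneg _)
        · rw [norm_mul]
          have h1 : ‖(X s : ℂ) - (X t : ℂ)‖ ≤ L * |s - t| := by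
            rw [← Complex.ofReal_sub, Complex.norm_real, Real.norm_eq_abs]
            exact hLb s hs t ht
          have h2 : ‖b (z + rtr ε t) - b z‖ ≤ Cb * ε ^ α := by
            calc ‖b (z + rtr ε t) - b z‖ ≤ Cb * |z + rtr ε t - z| ^ α := hC _ _
              _ = Cb * |rtr ε t| ^ α := by ring_nf
              _ ≤ Cb * ε ^ α := mul_le_mul_of_nonneg_left
                  (Real.rpow_le_rpow (abs_nonneg _) (rtr_abs_le hε0 t) hα0.le) hCb0
          calc ‖(X s : ℂ) - (X t : ℂ)‖ * ‖b (z + rtr ε t) - b z‖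
              ≤ (L * |s - t|) * (Cb * ε ^ α) :=
                mul_le_mul h1 h2 (norm_nonneg _) (by positivity)
            _ = Cb * ε ^ α * (L * |s - t|) := by ring
  -- tau membership
  have hτmem : ∀ x : ℝ, tau z x ∈ Set.Icc (-π) π := by
    intro x; rw [Set.mem_Icc]; exact abs_le.mp (tau_abs_le z x)
  -- same-round difference
  have hτsub : ∀ x y : ℝ, round ((x - z) / (2 * π)) = round ((y - z) / (2 * π)) →
      tau z x - tau z y = x - y := by
    intro x y h; unfold tau; rw [h]; ring
  -- different-round: both taus far out
  have hτfar : ∀ x y : ℝ, round ((x - z) / (2 * π)) ≠ round ((y - z) / (2 * π)) →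
      |x - y| < 1 → F (tau z x) = 0 ∧ F (tau z y) = 0 := by
    intro x y h hxy
    have hπ3 := pi_gt_three
    set kx := round ((x - z) / (2 * π))
    set ky := round ((y - z) / (2 * π))
    have hk : (1:ℝ) ≤ |(kx:ℝ) - (ky:ℝ)| := by
      have : (1:ℤ) ≤ |kx - ky| := Int.one_le_abs (sub_ne_zero.mpr h)
      calc (1:ℝ) = ((1:ℤ):ℝ) := by norm_num
        _ ≤ ((|kx - ky| : ℤ) : ℝ) := by exact_mod_cast this
        _ = |(kx:ℝ) - (ky:ℝ)| := by push_cast [Int.cast_abs]; ring_nf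
    have hsub : tau z x - tau z y = (x - y) - 2 * π * ((kx:ℝ) - (ky:ℝ)) := by
      unfold tau; push_cast; ring
    have hbig : 2 * π - |x - y| ≤ |tau z x - tau z y| := by
      rw [hsub]
      have h1 : 2 * π ≤ |2 * π * ((kx:ℝ) - (ky:ℝ))| := by
        rw [abs_mul, abs_of_pos (by positivity : (0:ℝ) < 2 * π)]
        nlinarith
      calc 2 * π - |x - y| ≤ |2 * π * ((kx:ℝ) - (ky:ℝ))| - |x - y| := by linarith
        _ ≤ |x - y - 2 * π * ((kx:ℝ) - (ky:ℝ))| := by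
            have h3 := abs_sub_abs_le_abs_sub (2 * π * ((kx:ℝ) - (ky:ℝ))) (x - y)
            have h2 : |2 * π * ((kx:ℝ) - (ky:ℝ)) - (x - y)| =
                |x - y - 2 * π * ((kx:ℝ) - (ky:ℝ))| := abs_sub_comm _ _
            rw [h2] at h3
            linarith
    have hty := tau_abs_le z y
    have htx := tau_abs_le z x
    have h5 : |tau z x - tau z y| ≤ |tau z x| + |tau z y| := abs_sub _ _
    constructor
    · exact hF0 _ (by linarith)
    · exact hF0 _ (by linarith)
  -- global increment bound (used for HolderFin)
  set K : ℝ := M * Cb + Cb * ε ^ α * L + 2 * (M * (Cb * ε ^ α)) with hK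
  have hK0 : 0 ≤ K := by positivity
  have hkey : ∀ x y : ℝ, x ≠ y →
      ‖bze X b z ε x - bze X b z ε y‖ ≤ K * |x - y| ^ α := by
    intro x y hxy
    have hd0 : 0 < |x - y| := abs_pos.mpr (sub_ne_zero.mpr hxy)
    have hrp : 0 < |x - y| ^ α := Real.rpow_pos_of_pos hd0 α
    rw [hcol, hcol]
    by_cases h1 : 1 ≤ |x - y|
    · have hone : (1:ℝ) ≤ |x - y| ^ α := Real.one_le_rpow h1 hα0.le
      calc ‖F (tau z x) - F (tau z y)‖
          ≤ ‖F (tau z x)‖ + ‖F (tau z y)‖ := by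
            simpa using norm_sub_le (F (tau z x)) (F (tau z y))
        _ ≤ M * (Cb * ε ^ α) + M * (Cb * ε ^ α) := add_le_add (hFb _) (hFb _)
        _ = 2 * (M * (Cb * ε ^ α)) := by ring
        _ ≤ K := by
            have p1 : 0 ≤ M * Cb := by positivity
            have p2 : 0 ≤ Cb * ε ^ α * L := by positivity
            rw [hK]; linarith
        _ = K * 1 := by ring
        _ ≤ K * |x - y| ^ α := by exact mul_le_mul_of_nonneg_left hone hK0
    · push_neg at h1
      by_cases h2 : round ((x - z) / (2 * π)) = round ((y - z) / (2 * π))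
      · have hsub := hτsub x y h2
        have hd1 : |x - y| ≤ |x - y| ^ α := by
          calc |x - y| = |x - y| ^ (1:ℝ) := (Real.rpow_one _).symm
            _ ≤ |x - y| ^ α := Real.rpow_le_rpow_of_exponent_ge hd0 h1.le hα1.le
        have hbb : ‖b (z + rtr ε (tau z x)) - b (z + rtr ε (tau z y))‖
            ≤ Cb * |x - y| ^ α := by
          calc ‖b (z + rtr ε (tau z x)) - b (z + rtr ε (tau z y))‖
              ≤ Cb * |z + rtr ε (tau z x) - (z + rtr ε (tau z y))| ^ α := hC _ _
            _ = Cb * |rtr ε (tau z x) - rtr ε (tau z y)| ^ α := by ring_nf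
            _ ≤ Cb * |tau z x - tau z y| ^ α := mul_le_mul_of_nonneg_left
                (Real.rpow_le_rpow (abs_nonneg _) (rtr_lip hε0 _ _) hα0.le) hCb0
            _ = Cb * |x - y| ^ α := by rw [hsub]
        calc ‖F (tau z x) - F (tau z y)‖
            ≤ M * ‖b (z + rtr ε (tau z x)) - b (z + rtr ε (tau z y))‖
              + Cb * ε ^ α * (L * |tau z x - tau z y|) := hFd _ _ (hτmem x) (hτmem y)
          _ ≤ M * (Cb * |x - y| ^ α) + Cb * ε ^ α * (L * |x - y| ^ α) := by
              rw [hsub]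
              exact add_le_add (mul_le_mul_of_nonneg_left hbb hM0')
                (mul_le_mul_of_nonneg_left (mul_le_mul_of_nonneg_left hd1 hL0')
                  (by positivity))
          _ = (M * Cb + Cb * ε ^ α * L) * |x - y| ^ α := by ring
          _ ≤ K * |x - y| ^ α := by
              apply mul_le_mul_of_nonneg_right _ hrp.le
              have p3 : 0 ≤ 2 * (M * (Cb * ε ^ α)) := by positivity
              rw [hK]; linarith
      · obtain ⟨e1, e2⟩ := hτfar x y h2 h1
        rw [e1, e2]
        simpa using mul_nonneg hK0 hrp.le
  refine ⟨?_, ?_, ?_⟩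
  · -- periodicity
    intro x
    rw [hcol, hcol, tau_add]
  · -- HolderFin
    refine ⟨K, fun r hr => ?_⟩
    obtain ⟨x, y, hxy, rfl⟩ := hr
    have hrp : 0 < |x - y| ^ α :=
      Real.rpow_pos_of_pos (abs_pos.mpr (sub_ne_zero.mpr hxy)) α
    rw [div_le_iff₀ hrp]
    exact hkey x y hxy
  · -- LittleHolder
    intro η hη
    obtain ⟨δb, hδb0, hδb⟩ := hbl (η / (4 * (M + 1))) (by positivity)
    set c : ℝ := η / (2 * (Cb * ε ^ α * L + 1)) with hc
    have hc0 : 0 < c := by positivity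
    set δ2 : ℝ := c ^ ((1:ℝ) / (1 - α)) with hδ2
    have hδ20 : 0 < δ2 := Real.rpow_pos_of_pos hc0 _
    refine ⟨min δb (min 1 δ2), by positivity, fun x y hd0 hdδ => ?_⟩
    have hxy : x ≠ y := fun h => by simp [h] at hd0
    have hrp : 0 < |x - y| ^ α := Real.rpow_pos_of_pos hd0 α
    have hd1 : |x - y| < 1 := lt_of_lt_of_le hdδ (le_trans (min_le_right _ _) (min_le_left _ _))
    have hdb : |x - y| < δb := lt_of_lt_of_le hdδ (min_le_left _ _)
    have hdd2 : |x - y| < δ2 := lt_of_lt_of_le hdδ (le_trans (min_le_right _ _) (min_le_right _ _))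
    rw [div_lt_iff₀ hrp, hcol, hcol]
    by_cases h2 : round ((x - z) / (2 * π)) = round ((y - z) / (2 * π))
    · have hsub := hτsub x y h2
      set u : ℝ := z + rtr ε (tau z x) with hu
      set v : ℝ := z + rtr ε (tau z y) with hv
      have huv : |u - v| ≤ |x - y| := by
        have e : u - v = rtr ε (tau z x) - rtr ε (tau z y) := by rw [hu, hv]; ring
        rw [e, ← hsub]
        exact rtr_lip hε0 _ _
      -- first term
      have hterm1 : M * ‖b u - b v‖ ≤ η / 4 * |x - y| ^ α := by
        have hb1 : ‖b u - b v‖ ≤ η / (4 * (M + 1)) * |x - y| ^ α := by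
          by_cases huv0 : u = v
          · rw [huv0]; simp; positivity
          · have hp : 0 < |u - v| := abs_pos.mpr (sub_ne_zero.mpr huv0)
            have hlt : |u - v| < δb := lt_of_le_of_lt huv hdb
            have hq := hδb u v hp hlt
            have hrpuv : 0 < |u - v| ^ α := Real.rpow_pos_of_pos hp α
            rw [div_lt_iff₀ hrpuv] at hq
            have h6 : |u - v| ^ α ≤ |x - y| ^ α := Real.rpow_le_rpow hp.le huv hα0.le
            have h7 : (0:ℝ) < η / (4 * (M + 1)) := by positivity
            calc ‖b u - b v‖ ≤ η / (4 * (M + 1)) * |u - v| ^ α := hq.le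
              _ ≤ η / (4 * (M + 1)) * |x - y| ^ α := by
                  exact mul_le_mul_of_nonneg_left h6 h7.le
        calc M * ‖b u - b v‖ ≤ M * (η / (4 * (M + 1)) * |x - y| ^ α) :=
              mul_le_mul_of_nonneg_left hb1 hM0'
          _ = M * (η / (4 * (M + 1))) * |x - y| ^ α := by ring
          _ ≤ η / 4 * |x - y| ^ α := by
              apply mul_le_mul_of_nonneg_right _ hrp.le
              have e2 : (M + 1) * (η / (4 * (M + 1))) = η / 4 := by
                field_simp
              calc M * (η / (4 * (M + 1))) ≤ (M + 1) * (η / (4 * (M + 1))) := by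
                    apply mul_le_mul_of_nonneg_right (by linarith) (by positivity)
                _ = η / 4 := e2
      -- second term
      have hterm2 : Cb * ε ^ α * (L * |x - y|) ≤ η / 2 * |x - y| ^ α := by
        set A : ℝ := Cb * ε ^ α * L with hA
        have hA0 : 0 ≤ A := by positivity
        have hsplit : |x - y| = |x - y| ^ (1 - α) * |x - y| ^ α := by
          rw [← Real.rpow_add hd0]
          norm_num
        have hfrac : |x - y| ^ (1 - α) ≤ c := by
          have h8 : |x - y| ^ (1 - α) ≤ δ2 ^ (1 - α) :=
            Real.rpow_le_rpow hd0.le hdd2.le (by linarith)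
          have h9 : δ2 ^ (1 - α) = c := by
            have hne : (1:ℝ) - α ≠ 0 := by intro h; linarith [hα1]
            rw [hδ2, ← Real.rpow_mul hc0.le, one_div_mul_cancel hne, Real.rpow_one]
          rw [h9] at h8; exact h8
        have hAc : A * c ≤ η / 2 := by
          have e3 : (A + 1) * c = η / 2 := by
            rw [hc, hA]; field_simp
          calc A * c ≤ (A + 1) * c := by
                apply mul_le_mul_of_nonneg_right (by linarith) hc0.le
            _ = η / 2 := e3
        have hxc : |x - y| ≤ c * |x - y| ^ α := by
          calc |x - y| = |x - y| ^ (1 - α) * |x - y| ^ α := hsplit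
            _ ≤ c * |x - y| ^ α := mul_le_mul_of_nonneg_right hfrac hrp.le
        calc Cb * ε ^ α * (L * |x - y|) = A * |x - y| := by rw [hA]; ring
          _ ≤ A * (c * |x - y| ^ α) := mul_le_mul_of_nonneg_left hxc hA0
          _ = A * c * |x - y| ^ α := by ring
          _ ≤ η / 2 * |x - y| ^ α := mul_le_mul_of_nonneg_right hAc hrp.le
      calc ‖F (tau z x) - F (tau z y)‖
          ≤ M * ‖b u - b v‖ + Cb * ε ^ α * (L * |tau z x - tau z y|) :=
            hFd _ _ (hτmem x) (hτmem y)
        _ = M * ‖b u - b v‖ + Cb * ε ^ α * (L * |x - y|) := by rw [hsub]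
        _ ≤ η / 4 * |x - y| ^ α + η / 2 * |x - y| ^ α := add_le_add hterm1 hterm2
        _ < η * |x - y| ^ α := by nlinarith
    · obtain ⟨e1, e2⟩ := hτfar x y h2 hd1
      rw [e1, e2]
      simpa using mul_pos hη hrp
end

section
/- Let α ∈ (0,1) and let X : ℝ → ℝ be continuously differentiable with X(x) = 0 for |x| ≥ 1. Let b : ℝ → ℂ be 2π-periodic, α-Hölder continuous, and satisfying the little-Hölder-α condition. For z ∈ ℝ and ε ∈ (0,1/2) define b_{z,ε}(x) := Σ_{k∈ℤ} X(x − z − 2πk)·( b(z + r_ε(x − z − 2πk)) − b(z) ). Then lim_{ε→0⁺} sup_{z∈ℝ} ( sup_ℝ |b_{z,ε}| + [b_{z,ε}]_α ) = 0; that is, for every η > 0 there exists ε₀ ∈ (0,1/2) such that for all ε ∈ (0,ε₀) and all z ∈ ℝ, sup|b_{z,ε}| + [b_{z,ε}]_α < η. -/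
open Real

/-- The Hölder seminorm `[g]_α`. -/
noncomputable def hSemi (α : ℝ) (g : ℝ → ℂ) : ℝ := sSup (holderSet α g)

-- helper lemmas

lemma rtr_eq_clamp {ε : ℝ} (hε : 0 ≤ ε) (x : ℝ) : rtr ε x = max (-ε) (min ε x) := by
  unfold rtr
  rcases le_or_gt x ε with h1 | h1
  · rcases le_or_gt (-ε) x with h2 | h2
    · rw [if_pos (abs_le.2 ⟨h2, h1⟩), min_eq_right h1, max_eq_right h2]
    · rw [if_neg, if_neg (by linarith), min_eq_right h1, max_eq_left h2.le]
      rw [abs_le]; push_neg; intro h; linarith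
  · rw [if_neg (by rw [abs_le]; push_neg; intro h; linarith), if_pos h1,
      min_eq_left h1.le, max_eq_right (by linarith)]

lemma abs_rtr_le {ε : ℝ} (hε : 0 ≤ ε) (x : ℝ) : |rtr ε x| ≤ ε := by
  unfold rtr
  split_ifs with h1 h2
  · exact h1
  · rw [abs_of_nonneg hε]
  · rw [abs_neg, abs_of_nonneg hε]

lemma abs_rtr_sub_rtr_le {ε : ℝ} (hε : 0 ≤ ε) (a b : ℝ) :
    |rtr ε a - rtr ε b| ≤ |a - b| := by
  rw [rtr_eq_clamp hε, rtr_eq_clamp hε, max_comm (-ε) (min ε a), max_comm (-ε) (min ε b)]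
  refine (abs_max_sub_max_le_abs _ _ _).trans ?_
  refine (abs_min_sub_min_le_max ε a ε b).trans ?_
  simp

lemma round_eq_of_abs_sub_lt {u : ℝ} {k : ℤ} (h : |u - k| < 1/2) : round u = k := by
  rw [round_eq, Int.floor_eq_iff]
  rw [abs_sub_lt_iff] at h
  constructor
  · push_cast; linarith [h.2]
  · push_cast; linarith [h.1]

lemma round_div_eq {v : ℝ} {k : ℤ} (h : |v - 2*π*k| < 2) : round (v/(2*π)) = k := by
  have h2π : (0:ℝ) < 2*π := by positivity
  apply round_eq_of_abs_sub_lt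
  have he : v/(2*π) - k = (v - 2*π*k)/(2*π) := by field_simp
  rw [he, abs_div, abs_of_pos h2π, div_lt_iff₀ h2π]
  nlinarith [Real.pi_gt_three]

lemma bze_eq (X : ℝ → ℝ) (hXsupp : ∀ x : ℝ, 1 ≤ |x| → X x = 0) (b : ℝ → ℂ) (z ε x : ℝ) :
    bze X b z ε x =
      (X (x - z - 2*π*(round ((x - z)/(2*π)) : ℤ)) : ℂ) *
        (b (z + rtr ε (x - z - 2*π*(round ((x - z)/(2*π)) : ℤ))) - b z) := by
  unfold bze
  apply tsum_eq_single
  intro k hk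
  have h2π : (0:ℝ) < 2*π := by positivity
  have hzero : X (x - z - 2*π*k) = 0 := by
    apply hXsupp
    set u := (x - z)/(2*π) with hu
    have hu2 : 2*π*u = x - z := mul_div_cancel₀ _ (ne_of_gt h2π)
    have h1 : x - z - 2*π*k = 2*π*(u - k) := by rw [mul_sub, hu2]
    have hr : |u - round u| ≤ 1/2 := abs_sub_round u
    have hk1 : (1:ℝ) ≤ |(round u : ℝ) - (k : ℝ)| := by
      have : (1:ℤ) ≤ |round u - k| := Int.one_le_abs (sub_ne_zero.2 (Ne.symm hk))
      calc (1:ℝ) ≤ ((|round u - k| : ℤ) : ℝ) := by exact_mod_cast this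
        _ = |(round u : ℝ) - (k : ℝ)| := by push_cast; ring
    have htri : |(round u : ℝ) - k| ≤ |(round u : ℝ) - u| + |u - k| := abs_sub_le _ u _
    have h3 : 1/2 ≤ |u - k| := by
      rw [abs_sub_comm] at hr; linarith
    rw [h1, abs_mul, abs_of_pos h2π]
    nlinarith [Real.pi_gt_three]
  rw [hzero]
  simp


set_option maxHeartbeats 1000000 in
/-- Uniform smallness of the localized coefficients: for a little-Hölder-α periodic `b`,
`sup |b_{z,ε}| + [b_{z,ε}]_α → 0` as `ε → 0⁺`, uniformly in `z ∈ ℝ`. -/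
theorem localized_coefficient_small
    (α : ℝ) (hα : α ∈ Set.Ioo (0 : ℝ) 1)
    (X : ℝ → ℝ) (hX : ContDiff ℝ 1 X) (hXsupp : ∀ x : ℝ, 1 ≤ |x| → X x = 0)
    (b : ℝ → ℂ) (hb : Per b) (hbH : HolderFin α b) (hbl : LittleHolder α b) :
    ∀ η > (0 : ℝ), ∃ ε₀ : ℝ, 0 < ε₀ ∧ ε₀ < 1 / 2 ∧
      ∀ ε : ℝ, 0 < ε → ε < ε₀ → ∀ z : ℝ,
        HolderFin α (bze X b z ε) ∧
        (⨆ x : ℝ, ‖bze X b z ε x‖) + hSemi α (bze X b z ε) < η := by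
  obtain ⟨hα0, hα1⟩ := hα
  intro η hη
  -- M : Hölder seminorm of b
  set M := hSemi α b with hMdef
  have hM0 : 0 ≤ M := by
    refine le_trans (by positivity) (le_csSup hbH ⟨0, 1, by norm_num, rfl⟩)
  have hM : ∀ p q : ℝ, ‖b p - b q‖ ≤ M * |p - q| ^ α := by
    intro p q
    rcases eq_or_ne p q with rfl | hpq
    · simp only [sub_self, norm_zero]
      exact mul_nonneg hM0 (Real.rpow_nonneg (abs_nonneg _) _)
    · have hq : (0:ℝ) < |p - q| ^ α :=
        Real.rpow_pos_of_pos (abs_pos.2 (sub_ne_zero.2 hpq)) _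
      have hmem : ‖b p - b q‖ / |p - q| ^ α ∈ holderSet α b := ⟨p, q, hpq, rfl⟩
      have h := le_csSup hbH hmem
      rw [div_le_iff₀ hq] at h
      exact h
  -- C : sup bound for |X|
  obtain ⟨C₁, hC₁⟩ : ∃ C, ∀ t ∈ Set.Icc (-1:ℝ) 1, ‖X t‖ ≤ C :=
    isCompact_Icc.exists_bound_of_continuousOn hX.continuous.continuousOn
  set C := max C₁ 0 with hCdef
  have hC0 : (0:ℝ) ≤ C := le_max_right _ _
  have hC : ∀ t, |X t| ≤ C := by
    intro t
    rcases le_or_gt (|t|) 1 with h | h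
    · rw [abs_le] at h
      exact le_trans (by simpa [Real.norm_eq_abs] using hC₁ t ⟨h.1, h.2⟩) (le_max_left _ _)
    · rw [hXsupp t h.le, abs_zero]; exact hC0
  -- L : Lipschitz constant for X
  have hXd : Differentiable ℝ X := hX.differentiable one_ne_zero
  have hderiv0 : ∀ t : ℝ, 1 < |t| → deriv X t = 0 := by
    intro t ht
    have hopen : IsOpen {y : ℝ | 1 < |y|} := isOpen_lt continuous_const continuous_abs
    have hev : X =ᶠ[nhds t] (fun _ => (0:ℝ)) := by
      filter_upwards [hopen.mem_nhds ht] with y hy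
      exact hXsupp y hy.le
    rw [hev.deriv_eq]; simp
  obtain ⟨L₁, hL₁⟩ : ∃ L, ∀ t ∈ Set.Icc (-2:ℝ) 2, ‖deriv X t‖ ≤ L :=
    isCompact_Icc.exists_bound_of_continuousOn (hX.continuous_deriv le_rfl).continuousOn
  set L := max L₁ 0 with hLdef
  have hL0 : (0:ℝ) ≤ L := le_max_right _ _
  have hLb : ∀ t, ‖deriv X t‖ ≤ L := by
    intro t
    rcases le_or_gt (|t|) 2 with h | h
    · rw [abs_le] at h
      exact le_trans (hL₁ t ⟨h.1, h.2⟩) (le_max_left _ _)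
    · rw [hderiv0 t (by linarith), norm_zero]; exact hL0
  have hL : ∀ a c : ℝ, |X a - X c| ≤ L * |a - c| := by
    intro a c
    have := convex_univ.norm_image_sub_le_of_norm_deriv_le (fun x _ => hXd x)
      (fun x _ => hLb x) (Set.mem_univ c) (Set.mem_univ a)
    simpa [Real.norm_eq_abs] using this
  -- little Hölder modulus
  set η' := η / (2*(C+1)) with hη'def
  have hη'0 : 0 < η' := by positivity
  obtain ⟨δ, hδ0, hδ⟩ := hbl η' hη'0
  -- choose ε₀
  set D := (3*C + L)*M + 1 with hDdef
  have hD0 : 0 < D := by positivity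
  set R := (η/(2*D)) ^ (1/α) with hRdef
  have hR0 : 0 < R := Real.rpow_pos_of_pos (by positivity) _
  refine ⟨min (min (δ/2) (1/4)) R, by positivity, ?_, ?_⟩
  · exact lt_of_le_of_lt ((min_le_left _ _).trans (min_le_right _ _)) (by norm_num)
  intro ε hε hεlt z
  have hε2δ : 2*ε < δ := by
    have := hεlt.trans_le ((min_le_left _ _).trans (min_le_left _ _)); linarith
  have hεα0 : 0 < ε ^ α := Real.rpow_pos_of_pos hε α
  have hεαD : D * ε ^ α < η/2 := by
    have h1 : ε < R := hεlt.trans_le (min_le_right _ _)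
    have h2 : ε ^ α < R ^ α := Real.rpow_lt_rpow hε.le h1 hα0
    have h3 : R ^ α = η/(2*D) := by
      rw [hRdef, ← Real.rpow_mul (by positivity), one_div_mul_cancel (ne_of_gt hα0),
        Real.rpow_one]
    have h4 : D * (ε ^ α) < D * (η/(2*D)) :=
      mul_lt_mul_of_pos_left (h3 ▸ h2) hD0
    calc D * ε ^ α < D * (η/(2*D)) := h4
      _ = η/2 := by field_simp
  -- pointwise representation
  have hbzeq : ∀ x : ℝ, bze X b z ε x =
      (X (x - z - 2*π*(round ((x - z)/(2*π)) : ℤ)) : ℂ) *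
        (b (z + rtr ε (x - z - 2*π*(round ((x - z)/(2*π)) : ℤ))) - b z) :=
    fun x => bze_eq X hXsupp b z ε x
  -- g bound
  have hg : ∀ t : ℝ, ‖b (z + rtr ε t) - b z‖ ≤ M * ε ^ α := by
    intro t
    have h1 := hM (z + rtr ε t) z
    have h2 : |z + rtr ε t - z| = |rtr ε t| := by ring_nf
    have h3 : |rtr ε t| ≤ ε := abs_rtr_le hε.le t
    refine h1.trans ?_
    rw [h2]
    exact mul_le_mul_of_nonneg_left
      (Real.rpow_le_rpow (abs_nonneg _) h3 hα0.le) hM0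
  -- sup bound
  have hsup : ∀ x : ℝ, ‖bze X b z ε x‖ ≤ C * (M * ε ^ α) := by
    intro x
    rw [hbzeq x, norm_mul, Complex.norm_real, Real.norm_eq_abs]
    exact mul_le_mul (hC _) (hg _) (norm_nonneg _) hC0
  set K := C * η' + L * (M * ε ^ α) + 2*(C*(M*ε^α)) with hK
  have hK0 : 0 ≤ K := by positivity
  -- Hölder bound
  have hhold : ∀ x y : ℝ, ‖bze X b z ε x - bze X b z ε y‖ ≤ K * |x - y| ^ α := by
    intro x y
    rcases eq_or_ne x y with rfl | hxy
    · simp [sub_self, Real.zero_rpow (ne_of_gt hα0)]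
    have hxy0 : 0 < |x - y| := abs_pos.2 (sub_ne_zero.2 hxy)
    have hxyα : 0 < |x - y| ^ α := Real.rpow_pos_of_pos hxy0 _
    rcases lt_or_ge (1:ℝ) (|x - y|) with hgt | hle
    · -- far apart: use sup bound
      have h1 : (1:ℝ) ≤ |x - y| ^ α := by
        have := Real.rpow_le_rpow zero_le_one hgt.le hα0.le
        rwa [Real.one_rpow] at this
      have htr : ‖bze X b z ε x - bze X b z ε y‖
          ≤ ‖bze X b z ε x‖ + ‖bze X b z ε y‖ := by
        simpa using norm_sub_le (bze X b z ε x) (bze X b z ε y)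
      have h2 : 2*(C*(M*ε^α)) ≤ 2*(C*(M*ε^α)) * |x - y| ^ α :=
        le_mul_of_one_le_right (by positivity) h1
      have h3 : 2*(C*(M*ε^α)) * |x - y| ^ α ≤ K * |x - y| ^ α := by
        apply mul_le_mul_of_nonneg_right ?_ hxyα.le
        rw [hK]
        nlinarith [mul_nonneg hC0 hη'0.le, mul_nonneg hL0 (mul_nonneg hM0 hεα0.le)]
      linarith [hsup x, hsup y]
    · -- close: single-bump estimate
      rw [hbzeq x, hbzeq y]
      set kx := round ((x - z)/(2*π)) with hkx
      set ky := round ((y - z)/(2*π)) with hky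
      set tx := x - z - 2*π*(kx:ℝ) with htx
      set ty := y - z - 2*π*(ky:ℝ) with hty
      by_cases hbig : 1 ≤ |tx| ∧ 1 ≤ |ty|
      · rw [hXsupp _ hbig.1, hXsupp _ hbig.2]
        simp only [Complex.ofReal_zero, zero_mul, sub_zero, sub_self, norm_zero]
        positivity
      · push_neg at hbig
        have hkxy : kx = ky := by
          rcases lt_or_ge (|tx|) 1 with hs | hs
          · have h1 : |y - z - 2*π*(kx:ℝ)| < 2 := by
              have he : y - z - 2*π*(kx:ℝ) = tx + (y - x) := by rw [htx]; ring
              rw [he]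
              calc |tx + (y - x)| ≤ |tx| + |y - x| := abs_add_le _ _
                _ < 2 := by rw [abs_sub_comm y x]; linarith
            rw [hky]; exact (round_div_eq h1).symm
          · have hs2 : |ty| < 1 := hbig hs
            have h1 : |x - z - 2*π*(ky:ℝ)| < 2 := by
              have he : x - z - 2*π*(ky:ℝ) = ty + (x - y) := by rw [hty]; ring
              rw [he]
              calc |ty + (x - y)| ≤ |ty| + |x - y| := abs_add_le _ _
                _ < 2 := by linarith
            rw [hkx]; exact round_div_eq h1
        have htxy : tx - ty = x - y := by rw [htx, hty, hkxy]; ring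
        -- decomposition
        have hdecomp : (X tx : ℂ) * (b (z + rtr ε tx) - b z) -
            (X ty : ℂ) * (b (z + rtr ε ty) - b z)
            = (X tx : ℂ) * (b (z + rtr ε tx) - b (z + rtr ε ty))
              + ((X tx : ℂ) - (X ty : ℂ)) * (b (z + rtr ε ty) - b z) := by ring
        rw [hdecomp]
        have hA : ‖(X tx : ℂ) * (b (z + rtr ε tx) - b (z + rtr ε ty))‖
            ≤ C * (η' * |x - y| ^ α) := by
          rw [norm_mul, Complex.norm_real, Real.norm_eq_abs]
          refine mul_le_mul (hC _) ?_ (norm_nonneg _) hC0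
          rcases eq_or_ne (rtr ε tx) (rtr ε ty) with he | hne
          · rw [he]
            simp only [sub_self, norm_zero]
            positivity
          · have hee : (z + rtr ε tx) - (z + rtr ε ty) = rtr ε tx - rtr ε ty := by ring
            have hd0 : 0 < |(z + rtr ε tx) - (z + rtr ε ty)| := by
              rw [hee]; exact abs_pos.2 (sub_ne_zero.2 hne)
            have hdlt : |(z + rtr ε tx) - (z + rtr ε ty)| < δ := by
              rw [hee]
              calc |rtr ε tx - rtr ε ty| ≤ |rtr ε tx| + |rtr ε ty| := abs_sub _ _
                _ ≤ ε + ε := add_le_add (abs_rtr_le hε.le _) (abs_rtr_le hε.le _)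
                _ < δ := by linarith
            have hq := hδ _ _ hd0 hdlt
            rw [div_lt_iff₀ (Real.rpow_pos_of_pos hd0 α)] at hq
            have hd2 : |(z + rtr ε tx) - (z + rtr ε ty)| ≤ |x - y| := by
              rw [hee]
              exact (abs_rtr_sub_rtr_le hε.le tx ty).trans (by rw [htxy])
            have h5 : η' * |(z + rtr ε tx) - (z + rtr ε ty)| ^ α ≤ η' * |x - y| ^ α :=
              mul_le_mul_of_nonneg_left (Real.rpow_le_rpow hd0.le hd2 hα0.le) hη'0.le
            linarith
        have hB : ‖((X tx : ℂ) - (X ty : ℂ)) * (b (z + rtr ε ty) - b z)‖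
            ≤ (L * |x - y|) * (M * ε ^ α) := by
          rw [norm_mul, ← Complex.ofReal_sub, Complex.norm_real, Real.norm_eq_abs]
          refine mul_le_mul ?_ (hg _) (norm_nonneg _) (by positivity)
          have := hL tx ty
          rwa [htxy] at this
        have htri : ‖(X tx : ℂ) * (b (z + rtr ε tx) - b (z + rtr ε ty))
              + ((X tx : ℂ) - (X ty : ℂ)) * (b (z + rtr ε ty) - b z)‖
            ≤ ‖(X tx : ℂ) * (b (z + rtr ε tx) - b (z + rtr ε ty))‖
              + ‖((X tx : ℂ) - (X ty : ℂ)) * (b (z + rtr ε ty) - b z)‖ := by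
          simpa using norm_add_le
            ((X tx : ℂ) * (b (z + rtr ε tx) - b (z + rtr ε ty)))
            (((X tx : ℂ) - (X ty : ℂ)) * (b (z + rtr ε ty) - b z))
        have hpow : |x - y| ≤ |x - y| ^ α := by
          calc |x - y| = |x - y| ^ (1:ℝ) := (Real.rpow_one _).symm
            _ ≤ |x - y| ^ α := Real.rpow_le_rpow_of_exponent_ge hxy0 hle hα1.le
        have h6 : (L * |x - y|) * (M * ε ^ α) ≤ (L * (M * ε ^ α)) * |x - y| ^ α := by
          nlinarith [mul_le_mul_of_nonneg_right hpow (by positivity : (0:ℝ) ≤ L * (M * ε ^ α))]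
        have h7 : (0:ℝ) ≤ 2*(C*(M*ε^α)) * |x - y| ^ α := by positivity
        have h8 : C * (η' * |x - y| ^ α) + (L * (M * ε ^ α)) * |x - y| ^ α
            ≤ K * |x - y| ^ α := by rw [hK]; nlinarith
        linarith
  -- conclusion
  have hbdd : HolderFin α (bze X b z ε) := by
    refine ⟨K, ?_⟩
    rintro r ⟨p, q, hpq, rfl⟩
    rw [div_le_iff₀ (Real.rpow_pos_of_pos (abs_pos.2 (sub_ne_zero.2 hpq)) _)]
    exact hhold p q
  refine ⟨hbdd, ?_⟩
  have h1 : (⨆ x : ℝ, ‖bze X b z ε x‖) ≤ C * (M * ε ^ α) := ciSup_le hsup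
  have h2 : hSemi α (bze X b z ε) ≤ K := by
    refine Real.sSup_le ?_ hK0
    rintro r ⟨p, q, hpq, rfl⟩
    rw [div_le_iff₀ (Real.rpow_pos_of_pos (abs_pos.2 (sub_ne_zero.2 hpq)) _)]
    exact hhold p q
  have hCη' : C * η' < η/2 := by
    have he : C * η' = (C*η)/(2*(C+1)) := by rw [hη'def]; ring
    rw [he, div_lt_div_iff₀ (by positivity) (by norm_num : (0:ℝ) < 2)]
    nlinarith
  have e1 : C * (M * ε ^ α) + K = C * η' + ((3*C + L)*M) * ε ^ α := by rw [hK]; ring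
  have e2 : ((3*C + L)*M) * ε ^ α < D * ε ^ α := by
    have : (3*C + L)*M < D := by rw [hDdef]; linarith
    exact mul_lt_mul_of_pos_right this hεα0
  linarith
end
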